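/- Let a, b, c ∈ ℂ with abc ≠ 0, and define sequences (Uₙ) and (Vₙ) in ℂ by (U₀, V₀) = (0, 1) and (U_{n+1}, V_{n+1}) = (aVₙ, bUₙ + cVₙ). Then there exists n ≥ 1 with Vₙ = 0 if and only if there exists a root of unity ζ ∈ ℂ with ζ ≠ 1 such that ζc² + (ζ + 1)²ab = 0. (This equivalence is the key criterion in the proof that f_{a,b,c} is algebraically stable if and only if (a,b,c) is not an exceptional triple.) -/

import Mathlib

/-- Let `a b c : ℂ` with `abc ≠ 0`, and define `(Uₙ), (Vₙ)` by
`(U₀, V₀) = (0, 1)` and `(U_{n+1}, V_{n+1}) = (aVₙ, bUₙ + cVₙ)`.  Then there is an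
`n ≥ 1` with `Vₙ = 0` iff there is a root of unity `ζ ∈ ℂ`, `ζ ≠ 1`, with
`ζc² + (ζ + 1)²ab = 0`. -/
theorem statement5 (a b c : ℂ) (habc : a * b * c ≠ 0) (U V : ℕ → ℂ)
    (hU0 : U 0 = 0) (hV0 : V 0 = 1)
    (hU : ∀ n : ℕ, U (n + 1) = a * V n)
    (hV : ∀ n : ℕ, V (n + 1) = b * U n + c * V n) :
    (∃ n : ℕ, 1 ≤ n ∧ V n = 0) ↔
      ∃ ζ : ℂ, (∃ m : ℕ, 1 ≤ m ∧ ζ ^ m = 1) ∧ ζ ≠ 1 ∧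
        ζ * c ^ 2 + (ζ + 1) ^ 2 * a * b = 0 := by
  have hab : a * b ≠ 0 := fun h => habc (by rw [h, zero_mul])
  obtain ⟨α, β, hsum, hprod⟩ : ∃ α β : ℂ, α + β = c ∧ α * β = -(a * b) := by
    obtain ⟨d, hd⟩ := IsAlgClosed.exists_pow_nat_eq (k := ℂ) (c ^ 2 + 4 * (a * b)) (n := 2)
      (by norm_num)
    exact ⟨(c + d) / 2, (c - d) / 2, by ring, by linear_combination -hd / 4⟩
  have hαβ0 : α * β ≠ 0 := by rw [hprod]; exact neg_ne_zero.mpr hab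
  have hα0 : α ≠ 0 := fun h => hαβ0 (by rw [h, zero_mul])
  have hβ0 : β ≠ 0 := fun h => hαβ0 (by rw [h, mul_zero])
  have hrec : ∀ n : ℕ, V (n + 2) = c * V (n + 1) + a * b * V n := by
    intro n
    rw [hV (n + 1), hU n]; ring
  have keyA : ∀ n : ℕ, (α - β) * V n = α ^ (n + 1) - β ^ (n + 1) := by
    have H : ∀ n : ℕ, (α - β) * V n = α ^ (n + 1) - β ^ (n + 1) ∧
        (α - β) * V (n + 1) = α ^ (n + 2) - β ^ (n + 2) := by
      intro n
      induction n with
      | zero =>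
        have h1 : V 1 = c := by rw [hV 0, hU0, hV0]; ring
        exact ⟨by rw [hV0]; ring, by rw [h1]; linear_combination (β - α) * hsum⟩
      | succ n ih =>
        refine ⟨ih.2, ?_⟩
        rw [hrec n]
        linear_combination c * ih.2 + a * b * ih.1 - (α ^ (n + 2) - β ^ (n + 2)) * hsum
          + (α ^ (n + 1) - β ^ (n + 1)) * hprod
    exact fun n => (H n).1
  have keyB : α = β → ∀ n : ℕ, V n = ((n : ℂ) + 1) * α ^ n := by
    intro he
    have H : ∀ n : ℕ, V n = ((n : ℂ) + 1) * α ^ n ∧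
        V (n + 1) = ((n : ℂ) + 2) * α ^ (n + 1) := by
      intro n
      induction n with
      | zero =>
        have h1 : V 1 = c := by rw [hV 0, hU0, hV0]; ring
        refine ⟨by rw [hV0]; ring, ?_⟩
        rw [h1]; push_cast
        linear_combination -hsum - he
      | succ n ih =>
        refine ⟨by push_cast; linear_combination ih.2, ?_⟩
        rw [hrec n]
        push_cast
        push_cast at ih
        linear_combination c * ih.2 + a * b * ih.1 - ((n : ℂ) + 2) * α ^ (n + 1) * hsum
          + ((n : ℂ) + 1) * α ^ n * hprod - α ^ (n + 1) * he
    exact fun n => (H n).1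
  constructor
  · rintro ⟨n, hn, hVn⟩
    by_cases he : α = β
    · exfalso
      have h := keyB he n
      rw [hVn] at h
      exact mul_ne_zero (by exact_mod_cast Nat.succ_ne_zero n) (pow_ne_zero _ hα0) h.symm
    · refine ⟨α / β, ⟨n + 1, by omega, ?_⟩, ?_, ?_⟩
      · have h := keyA n
        rw [hVn, mul_zero] at h
        have hpow : α ^ (n + 1) = β ^ (n + 1) := by linear_combination -h
        rw [div_pow, hpow, div_self (pow_ne_zero _ hβ0)]
      · intro h
        exact he ((div_eq_one_iff_eq hβ0).mp h)
      · have hkey : α * β * c ^ 2 + (α + β) ^ 2 * (a * b) = 0 := by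
          linear_combination (-(α * β) * (α + β + c)) * hsum + (α + β) ^ 2 * hprod
        field_simp
        linear_combination hkey
  · rintro ⟨ζ, ⟨m, hm, hζm⟩, hζ1, heq⟩
    have hm2 : 2 ≤ m := by
      have hm1 : m ≠ 1 := fun h => hζ1 (by simpa [h] using hζm)
      omega
    have hfac : (ζ * α - β) * (α - ζ * β) = 0 := by
      linear_combination heq + ζ * (α + β + c) * hsum - (ζ + 1) ^ 2 * hprod
    have hne : α ≠ β ∧ α ^ m = β ^ m := by
      rcases mul_eq_zero.mp hfac with h | h
      · have hβ' : β = ζ * α := by linear_combination -h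
        constructor
        · intro hab'
          apply hζ1
          rw [hab'] at hβ'
          field_simp [hβ0] at hβ'
          linear_combination -hβ'
        · rw [hβ', mul_pow, hζm, one_mul]
      · have hα' : α = ζ * β := by linear_combination h
        constructor
        · intro hab'
          apply hζ1
          rw [hab'] at hα'
          field_simp [hβ0] at hα'
          linear_combination -hα'
        · rw [hα', mul_pow, hζm, one_mul]
    refine ⟨m - 1, by omega, ?_⟩
    have h := keyA (m - 1)
    rw [Nat.sub_add_cancel (by omega : 1 ≤ m), hne.2, sub_self] at h
    exact (mul_eq_zero.mp h).resolve_left (sub_ne_zero.mpr hne.1)
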